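/- Let φ₀, φ₁ be nondegenerate Orlicz functions in Δ₂, θ ∈ (0,1), φ_θ as above, and g_x as above. Then there exists a constant K > 0 such that for all x ∈ ℂ: φ_θ(|2·g_x'(θ) − g_{2x}'(θ)|) ≤ K·φ_θ(|x|). Consequently the quasi-Young function ψ(x₁, x₀) = φ_θ(x₀) + φ_θ(x₁ − g_{x₀}'(θ)) on ℂ² satisfies the Δ₂ condition: ψ(2x₁, 2x₀) ≤ M·ψ(x₁, x₀) for some M and all (x₁, x₀). -/

import Mathlib

open Complex

noncomputable def csgn (x : ℂ) : ℂ := if x = 0 then 0 else x / ‖x‖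

/-- A convex function vanishing at 0 and nonnegative on `[0,∞)` is monotone there. -/
lemma orlicz_mono_aux (φ : ℝ → ℝ) (hconv : ConvexOn ℝ (Set.Ici 0) φ) (hzero : φ 0 = 0)
    (hnonneg : ∀ t, 0 ≤ t → 0 ≤ φ t) :
    ∀ s t : ℝ, 0 ≤ s → s ≤ t → φ s ≤ φ t := by
  intro s t hs hst
  rcases eq_or_lt_of_le (hs.trans hst) with h | ht
  · have hs0 : s = 0 := le_antisymm (hst.trans h.symm.le) hs
    rw [hs0, ← h]
  · have h1 : s / t ≤ 1 := div_le_one_of_le₀ hst (hs.trans hst)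
    have key := hconv.2 (Set.mem_Ici.mpr le_rfl) (Set.mem_Ici.mpr (hs.trans hst))
      (show (0:ℝ) ≤ 1 - s / t by linarith)
      (show (0:ℝ) ≤ s / t from div_nonneg hs (hs.trans hst))
      (show (1 - s / t) + s / t = 1 by ring)
    simp only [smul_eq_mul, mul_zero, zero_add] at key
    rw [div_mul_cancel₀ _ ht.ne'] at key
    have h2 : 0 ≤ φ t := hnonneg t (hs.trans hst)
    nlinarith [key]

/-- A convex function vanishing at 0 satisfies `2 φ t ≤ φ (2t)`. -/
lemma orlicz_doub_aux (φ : ℝ → ℝ) (hconv : ConvexOn ℝ (Set.Ici 0) φ) (hzero : φ 0 = 0) :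
    ∀ t : ℝ, 0 ≤ t → 2 * φ t ≤ φ (2 * t) := by
  intro t ht
  have key := hconv.2 (Set.mem_Ici.mpr le_rfl) (Set.mem_Ici.mpr (by linarith : (0:ℝ) ≤ 2 * t))
    (show (0:ℝ) ≤ 1/2 by norm_num) (show (0:ℝ) ≤ 1/2 by norm_num)
    (show (1:ℝ)/2 + 1/2 = 1 by norm_num)
  simp only [smul_eq_mul, mul_zero, zero_add] at key
  have : (1:ℝ)/2 * (2 * t) = t := by ring
  rw [this] at key
  linarith [key]

/-- Monotonicity of a two-sided inverse of a monotone function. -/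
lemma inv_mono_aux (φ φinv : ℝ → ℝ)
    (hmono : ∀ s t : ℝ, 0 ≤ s → s ≤ t → φ s ≤ φ t)
    (hinv_nonneg : ∀ s, 0 ≤ s → 0 ≤ φinv s)
    (hright : ∀ s, 0 ≤ s → φ (φinv s) = s) :
    ∀ u v : ℝ, 0 ≤ u → u ≤ v → φinv u ≤ φinv v := by
  intro u v hu huv
  by_contra h
  push_neg at h
  have h2 : φ (φinv v) ≤ φ (φinv u) :=
    hmono _ _ (hinv_nonneg v (hu.trans huv)) h.le
  rw [hright u hu, hright v (hu.trans huv)] at h2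
  have : u = v := le_antisymm huv h2
  rw [this] at h
  exact absurd rfl h.ne

set_option maxHeartbeats 1000000 in
/-- the estimate `φ_θ(|2g_x'(θ) − g_{2x}'(θ)|) ≤ K φ_θ(|x|)`, and the
Δ₂ condition for the quasi-Young function
`ψ(x₁,x₀) = φ_θ(x₀) + φ_θ(x₁ − g_{x₀}'(θ))` on `ℂ²`. -/
theorem derivation_delta2
    (φ₀ φ₁ φ₀inv φ₁inv φθ : ℝ → ℝ) (θ : ℝ) (hθ : θ ∈ Set.Ioo (0:ℝ) 1)
    -- φ₀, φ₁ are nondegenerate Orlicz functions in Δ₂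
    (hconv₀ : ConvexOn ℝ (Set.Ici 0) φ₀) (hzero₀ : φ₀ 0 = 0)
    (hnonneg₀ : ∀ t, 0 ≤ t → 0 ≤ φ₀ t)
    (htop₀ : Filter.Tendsto φ₀ Filter.atTop Filter.atTop)
    (hnondeg₀ : ∀ t, 0 < t → 0 < φ₀ t)
    (hΔ₂₀ : ∃ M > 0, ∀ t, 0 ≤ t → φ₀ (2 * t) ≤ M * φ₀ t)
    (hconv₁ : ConvexOn ℝ (Set.Ici 0) φ₁) (hzero₁ : φ₁ 0 = 0)
    (hnonneg₁ : ∀ t, 0 ≤ t → 0 ≤ φ₁ t)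
    (htop₁ : Filter.Tendsto φ₁ Filter.atTop Filter.atTop)
    (hnondeg₁ : ∀ t, 0 < t → 0 < φ₁ t)
    (hΔ₂₁ : ∃ M > 0, ∀ t, 0 ≤ t → φ₁ (2 * t) ≤ M * φ₁ t)
    -- φ₀inv, φ₁inv are the inverses of φ₀, φ₁ on [0,∞)
    (hinv_nonneg₀ : ∀ s, 0 ≤ s → 0 ≤ φ₀inv s)
    (hleft₀ : ∀ t, 0 ≤ t → φ₀inv (φ₀ t) = t)
    (hright₀ : ∀ s, 0 ≤ s → φ₀ (φ₀inv s) = s)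
    (hinv_nonneg₁ : ∀ s, 0 ≤ s → 0 ≤ φ₁inv s)
    (hleft₁ : ∀ t, 0 ≤ t → φ₁inv (φ₁ t) = t)
    (hright₁ : ∀ s, 0 ≤ s → φ₁ (φ₁inv s) = s)
    -- φθ is the Orlicz function with φθ⁻¹ = (φ₀⁻¹)^{1−θ} (φ₁⁻¹)^θ
    (hθnonneg : ∀ s, 0 ≤ s → 0 ≤ φθ s)
    (hθleft : ∀ t, 0 ≤ t → φθ (φ₀inv t ^ (1 - θ) * φ₁inv t ^ θ) = t)
    (hθright : ∀ s, 0 ≤ s → φ₀inv (φθ s) ^ (1 - θ) * φ₁inv (φθ s) ^ θ = s)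
    :
    let g : ℂ → ℂ → ℂ := fun x z =>
      ((φ₀inv (φθ (‖x‖)) : ℂ) ^ ((1 : ℂ) - z)) *
        ((φ₁inv (φθ (‖x‖)) : ℂ) ^ z) * csgn x
    let Ω : ℂ → ℂ := fun x => deriv (g x) θ
    let Ψ : ℂ × ℂ → ℝ := fun p =>
      φθ (‖p.2‖) + φθ (‖p.1 - Ω p.2‖)
    (∃ K : ℝ, 0 < K ∧ ∀ x : ℂ,
      φθ (‖2 * Ω x - Ω (2 * x)‖) ≤ K * φθ (‖x‖)) ∧
    (∃ M : ℝ, 0 < M ∧ ∀ x₁ x₀ : ℂ, Ψ (2 * x₁, 2 * x₀) ≤ M * Ψ (x₁, x₀)) := by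
  obtain ⟨hθ0, hθ1⟩ := hθ
  obtain ⟨M₀, hM₀, hdelta₀⟩ := hΔ₂₀
  obtain ⟨M₁, hM₁, hdelta₁⟩ := hΔ₂₁
  intro g Ω Ψ
  -- basic monotonicity facts
  have hmono₀ := orlicz_mono_aux φ₀ hconv₀ hzero₀ hnonneg₀
  have hmono₁ := orlicz_mono_aux φ₁ hconv₁ hzero₁ hnonneg₁
  have hinvmono₀ := inv_mono_aux φ₀ φ₀inv hmono₀ hinv_nonneg₀ hright₀
  have hinvmono₁ := inv_mono_aux φ₁ φ₁inv hmono₁ hinv_nonneg₁ hright₁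
  have hdoub₀ := orlicz_doub_aux φ₀ hconv₀ hzero₀
  have hdoub₁ := orlicz_doub_aux φ₁ hconv₁ hzero₁
  -- inverses vanish at 0
  have hinv0₀ : φ₀inv 0 = 0 := by
    have := hleft₀ 0 le_rfl; rwa [hzero₀] at this
  have hinv0₁ : φ₁inv 0 = 0 := by
    have := hleft₁ 0 le_rfl; rwa [hzero₁] at this
  -- φθ 0 = 0
  have hφθ0 : φθ 0 = 0 := by
    have := hθleft 0 le_rfl
    rw [hinv0₀, hinv0₁, Real.zero_rpow (by linarith : 1 - θ ≠ 0), zero_mul] at this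
    exact this
  -- φθ is monotone on [0,∞)
  have hφθmono : ∀ s t : ℝ, 0 ≤ s → s ≤ t → φθ s ≤ φθ t := by
    intro s t hs hst
    by_contra h
    push_neg at h
    have hts : 0 ≤ φθ t := hθnonneg t (hs.trans hst)
    have h0 : φ₀inv (φθ t) ≤ φ₀inv (φθ s) := hinvmono₀ _ _ hts h.le
    have h1 : φ₁inv (φθ t) ≤ φ₁inv (φθ s) := hinvmono₁ _ _ hts h.le
    have key : t ≤ s := by
      calc t = φ₀inv (φθ t) ^ (1 - θ) * φ₁inv (φθ t) ^ θ := (hθright t (hs.trans hst)).symm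
        _ ≤ φ₀inv (φθ s) ^ (1 - θ) * φ₁inv (φθ s) ^ θ := by
            apply mul_le_mul
            · exact Real.rpow_le_rpow (hinv_nonneg₀ _ hts) h0 (by linarith)
            · exact Real.rpow_le_rpow (hinv_nonneg₁ _ hts) h1 (by linarith)
            · exact Real.rpow_nonneg (hinv_nonneg₁ _ hts) _
            · exact Real.rpow_nonneg (hinv_nonneg₀ _ (hθnonneg s hs)) _
        _ = s := hθright s hs
    have : s = t := le_antisymm hst key
    rw [this] at h
    exact absurd rfl h.ne
  -- positivity
  have hφθpos : ∀ s : ℝ, 0 < s → 0 < φθ s := by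
    intro s hs
    rcases (hθnonneg s hs.le).lt_or_eq with h | h
    · exact h
    · exfalso
      have := hθright s hs.le
      rw [← h, hinv0₀, hinv0₁, Real.zero_rpow (by linarith : 1 - θ ≠ 0), zero_mul] at this
      linarith
  have hinvpos₀ : ∀ s : ℝ, 0 < s → 0 < φ₀inv (φθ s) := by
    intro s hs
    rcases (hinv_nonneg₀ _ (hθnonneg s hs.le)).lt_or_eq with h | h
    · exact h
    · exfalso
      have := hθright s hs.le
      rw [← h, Real.zero_rpow (by linarith : 1 - θ ≠ 0), zero_mul] at this
      linarith
  have hinvpos₁ : ∀ s : ℝ, 0 < s → 0 < φ₁inv (φθ s) := by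
    intro s hs
    rcases (hinv_nonneg₁ _ (hθnonneg s hs.le)).lt_or_eq with h | h
    · exact h
    · exfalso
      have := hθright s hs.le
      rw [← h, Real.zero_rpow (by linarith : θ ≠ 0), mul_zero] at this
      linarith
  -- the Δ₂ constant for φθ
  set C : ℝ := max (max M₀ M₁) 2 with hCdef
  have hC2 : (2:ℝ) ≤ C := le_max_right _ _
  have hC1 : (1:ℝ) < C := by linarith
  have hC0 : (0:ℝ) < C := by linarith
  have hCM₀ : M₀ ≤ C := le_trans (le_max_left _ _) (le_max_left _ _)
  have hCM₁ : M₁ ≤ C := le_trans (le_max_right _ _) (le_max_left _ _)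
  -- Δ₂ for φθ
  have hφθ2 : ∀ s : ℝ, 0 ≤ s → φθ (2 * s) ≤ C * φθ s := by
    intro s hs
    set u := φθ s with hu
    have hu0 : 0 ≤ u := hθnonneg s hs
    set a := φ₀inv u with ha
    set b := φ₁inv u with hb
    have ha0 : 0 ≤ a := hinv_nonneg₀ u hu0
    have hb0 : 0 ≤ b := hinv_nonneg₁ u hu0
    have hsplit : 2 * s = (2 * a) ^ (1 - θ) * (2 * b) ^ θ := by
      rw [Real.mul_rpow (by norm_num) ha0, Real.mul_rpow (by norm_num) hb0]
      have h2 : (2:ℝ) ^ (1 - θ) * 2 ^ θ = 2 := by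
        rw [← Real.rpow_add (by norm_num : (0:ℝ) < 2)]
        norm_num
      calc 2 * s = 2 * (a ^ (1 - θ) * b ^ θ) := by rw [hθright s hs]
        _ = (2:ℝ) ^ (1 - θ) * 2 ^ θ * (a ^ (1 - θ) * b ^ θ) := by rw [h2]
        _ = 2 ^ (1 - θ) * a ^ (1 - θ) * (2 ^ θ * b ^ θ) := by ring
    have hkey₀ : 2 * a ≤ φ₀inv (C * u) := by
      have h1 : φ₀ (2 * a) ≤ C * u := by
        calc φ₀ (2 * a) ≤ M₀ * φ₀ a := hdelta₀ a ha0
          _ = M₀ * u := by rw [ha, hright₀ u hu0]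
          _ ≤ C * u := by nlinarith
      have h2 := hinvmono₀ _ _ (hnonneg₀ _ (by linarith)) h1
      rwa [hleft₀ _ (by linarith)] at h2
    have hkey₁ : 2 * b ≤ φ₁inv (C * u) := by
      have h1 : φ₁ (2 * b) ≤ C * u := by
        calc φ₁ (2 * b) ≤ M₁ * φ₁ b := hdelta₁ b hb0
          _ = M₁ * u := by rw [hb, hright₁ u hu0]
          _ ≤ C * u := by nlinarith
      have h2 := hinvmono₁ _ _ (hnonneg₁ _ (by linarith)) h1
      rwa [hleft₁ _ (by linarith)] at h2
    have hCu0 : 0 ≤ C * u := by positivity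
    calc φθ (2 * s) ≤ φθ (φ₀inv (C * u) ^ (1 - θ) * φ₁inv (C * u) ^ θ) := by
          apply hφθmono _ _ (by positivity)
          rw [hsplit]
          apply mul_le_mul
          · exact Real.rpow_le_rpow (by linarith) hkey₀ (by linarith)
          · exact Real.rpow_le_rpow (by linarith) hkey₁ (by linarith)
          · exact Real.rpow_nonneg (by linarith) _
          · exact Real.rpow_nonneg (hinv_nonneg₀ _ hCu0) _
      _ = C * u := hθleft _ hCu0
  -- iterated Δ₂ for φθ
  have hφθpow : ∀ n : ℕ, ∀ s : ℝ, 0 ≤ s → φθ (2 ^ n * s) ≤ C ^ n * φθ s := by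
    intro n
    induction n with
    | zero => intro s hs; simp
    | succ n ih =>
        intro s hs
        have h1 : (2:ℝ) ^ (n + 1) * s = 2 * (2 ^ n * s) := by ring
        rw [h1]
        calc φθ (2 * (2 ^ n * s)) ≤ C * φθ (2 ^ n * s) := hφθ2 _ (by positivity)
          _ ≤ C * (C ^ n * φθ s) := by
              have := ih s hs
              nlinarith
          _ = C ^ (n + 1) * φθ s := by ring
  -- doubling of the inverses, iterated
  have hinvdoub₀ : ∀ s : ℝ, 0 ≤ s → φ₀inv (2 * s) ≤ 2 * φ₀inv s := by
    intro s hs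
    have h1 : 2 * s ≤ φ₀ (2 * φ₀inv s) := by
      have := hdoub₀ (φ₀inv s) (hinv_nonneg₀ s hs)
      rwa [hright₀ s hs] at this
    have h2 := hinvmono₀ _ _ (by linarith) h1
    rwa [hleft₀ _ (by linarith [hinv_nonneg₀ s hs])] at h2
  have hinvdoub₁ : ∀ s : ℝ, 0 ≤ s → φ₁inv (2 * s) ≤ 2 * φ₁inv s := by
    intro s hs
    have h1 : 2 * s ≤ φ₁ (2 * φ₁inv s) := by
      have := hdoub₁ (φ₁inv s) (hinv_nonneg₁ s hs)
      rwa [hright₁ s hs] at this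
    have h2 := hinvmono₁ _ _ (by linarith) h1
    rwa [hleft₁ _ (by linarith [hinv_nonneg₁ s hs])] at h2
  have hinvpow₀ : ∀ n : ℕ, ∀ s : ℝ, 0 ≤ s → φ₀inv (2 ^ n * s) ≤ 2 ^ n * φ₀inv s := by
    intro n
    induction n with
    | zero => intro s hs; simp
    | succ n ih =>
        intro s hs
        have h1 : (2:ℝ) ^ (n + 1) * s = 2 * (2 ^ n * s) := by ring
        rw [h1]
        calc φ₀inv (2 * (2 ^ n * s)) ≤ 2 * φ₀inv (2 ^ n * s) := hinvdoub₀ _ (by positivity)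
          _ ≤ 2 * (2 ^ n * φ₀inv s) := by linarith [ih s hs]
          _ = 2 ^ (n + 1) * φ₀inv s := by ring
  have hinvpow₁ : ∀ n : ℕ, ∀ s : ℝ, 0 ≤ s → φ₁inv (2 ^ n * s) ≤ 2 ^ n * φ₁inv s := by
    intro n
    induction n with
    | zero => intro s hs; simp
    | succ n ih =>
        intro s hs
        have h1 : (2:ℝ) ^ (n + 1) * s = 2 * (2 ^ n * s) := by ring
        rw [h1]
        calc φ₁inv (2 * (2 ^ n * s)) ≤ 2 * φ₁inv (2 ^ n * s) := hinvdoub₁ _ (by positivity)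
          _ ≤ 2 * (2 ^ n * φ₁inv s) := by linarith [ih s hs]
          _ = 2 ^ (n + 1) * φ₁inv s := by ring
  -- Ω at 0
  have hΩ0 : Ω 0 = 0 := by
    have hg : g 0 = fun _ : ℂ => 0 := by
      funext z
      simp [g, csgn]
    simp only [Ω, hg, deriv_const]
  -- formula for Ω
  have hΩ : ∀ x : ℂ, x ≠ 0 → Ω x =
      x * ((Real.log (φ₁inv (φθ (‖x‖))) -
            Real.log (φ₀inv (φθ (‖x‖))) : ℝ) : ℂ) := by
    intro x hx
    have habs : 0 < ‖x‖ := norm_pos_iff.mpr hx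
    set A : ℝ := φ₀inv (φθ (‖x‖)) with hA
    set B : ℝ := φ₁inv (φθ (‖x‖)) with hB
    have hApos : 0 < A := hinvpos₀ _ habs
    have hBpos : 0 < B := hinvpos₁ _ habs
    have hA0 : (A:ℂ) ≠ 0 := by exact_mod_cast hApos.ne'
    have hB0 : (B:ℂ) ≠ 0 := by exact_mod_cast hBpos.ne'
    have h1 : HasDerivAt (fun z : ℂ => (A:ℂ) ^ ((1:ℂ) - z))
        ((A:ℂ) ^ ((1:ℂ) - (θ:ℂ)) * Complex.log A * (-1)) (θ:ℂ) := by
      have hd : HasDerivAt (fun z : ℂ => (1:ℂ) - z) (-1) (θ:ℂ) :=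
        (hasDerivAt_id (θ:ℂ)).const_sub 1
      exact hd.const_cpow (Or.inl hA0)
    have h2 : HasDerivAt (fun z : ℂ => (B:ℂ) ^ z)
        ((B:ℂ) ^ (θ:ℂ) * Complex.log B * 1) (θ:ℂ) := by
      exact (hasDerivAt_id (θ:ℂ)).const_cpow (Or.inl hB0)
    have h3 : HasDerivAt (g x)
        (((A:ℂ) ^ ((1:ℂ) - (θ:ℂ)) * Complex.log A * (-1) * ((B:ℂ) ^ (θ:ℂ)) +
          (A:ℂ) ^ ((1:ℂ) - (θ:ℂ)) * ((B:ℂ) ^ (θ:ℂ) * Complex.log B * 1)) * csgn x) (θ:ℂ) := by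
      exact (h1.mul h2).mul_const (csgn x)
    have hder : Ω x = ((A:ℂ) ^ ((1:ℂ) - (θ:ℂ)) * Complex.log A * (-1) * ((B:ℂ) ^ (θ:ℂ)) +
          (A:ℂ) ^ ((1:ℂ) - (θ:ℂ)) * ((B:ℂ) ^ (θ:ℂ) * Complex.log B * 1)) * csgn x := by
      simpa only [Ω] using h3.deriv
    -- simplify
    have hAB : (A:ℂ) ^ ((1:ℂ) - (θ:ℂ)) * (B:ℂ) ^ (θ:ℂ) = ((‖x‖ : ℝ) : ℂ) := by
      have e1 : ((1:ℂ) - (θ:ℂ)) = ((1 - θ : ℝ) : ℂ) := by push_cast; ring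
      rw [e1, ← Complex.ofReal_cpow hApos.le, ← Complex.ofReal_cpow hBpos.le,
        ← Complex.ofReal_mul, hθright _ habs.le]
    have hlogA : Complex.log (A:ℂ) = ((Real.log A : ℝ) : ℂ) := (Complex.ofReal_log hApos.le).symm
    have hlogB : Complex.log (B:ℂ) = ((Real.log B : ℝ) : ℂ) := (Complex.ofReal_log hBpos.le).symm
    have hcsgn : csgn x = x / ((‖x‖ : ℝ) : ℂ) := by
      simp [csgn, hx]
    have habsC : ((‖x‖ : ℝ) : ℂ) ≠ 0 := by exact_mod_cast habs.ne'
    rw [hder, hcsgn, hlogA, hlogB]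
    have : (A:ℂ) ^ ((1:ℂ) - (θ:ℂ)) * ((Real.log A : ℝ) : ℂ) * (-1) * ((B:ℂ) ^ (θ:ℂ)) +
        (A:ℂ) ^ ((1:ℂ) - (θ:ℂ)) * ((B:ℂ) ^ (θ:ℂ) * ((Real.log B : ℝ) : ℂ) * 1) =
        ((A:ℂ) ^ ((1:ℂ) - (θ:ℂ)) * (B:ℂ) ^ (θ:ℂ)) *
          (((Real.log B : ℝ) : ℂ) - ((Real.log A : ℝ) : ℂ)) := by ring
    rw [this, hAB]
    push_cast
    field_simp
  -- choose N with C ≤ 2 ^ N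
  obtain ⟨N, hN⟩ := pow_unbounded_of_one_lt C (one_lt_two (α := ℝ))
  -- the main estimate
  have hlog2 : Real.log 2 ≤ 1 := by
    have := Real.log_two_lt_d9
    linarith
  set K : ℝ := C ^ (N + 1) with hKdef
  have hKpos : 0 < K := by positivity
  have hmain : ∀ x : ℂ, φθ (‖2 * Ω x - Ω (2 * x)‖) ≤ K * φθ (‖x‖) := by
    intro x
    rcases eq_or_ne x 0 with rfl | hx
    · simp only [mul_zero, hΩ0, sub_zero, norm_zero]
      rw [hφθ0]
      simp [hΩ0, hφθ0]
    · have habs : 0 < ‖x‖ := norm_pos_iff.mpr hx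
      have h2x : (2:ℂ) * x ≠ 0 := mul_ne_zero two_ne_zero hx
      have habs2 : ‖2 * x‖ = 2 * ‖x‖ := by
        rw [norm_mul, Complex.norm_two]
      set u := φθ (‖x‖) with hu
      set v := φθ (‖2 * x‖) with hv
      have hu0 : 0 < u := hφθpos _ habs
      have huv : u ≤ v := by
        rw [hu, hv, habs2]
        exact hφθmono _ _ habs.le (by linarith)
      have hvC : v ≤ C * u := by
        rw [hv, habs2]
        exact hφθ2 _ habs.le
      set a := φ₀inv u with ha
      set a' := φ₀inv v with ha'
      set b := φ₁inv u with hb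
      set b' := φ₁inv v with hb'
      have hapos : 0 < a := hinvpos₀ _ habs
      have hbpos : 0 < b := hinvpos₁ _ habs
      have haa' : a ≤ a' := hinvmono₀ _ _ hu0.le huv
      have hbb' : b ≤ b' := hinvmono₁ _ _ hu0.le huv
      have ha'bound : a' ≤ 2 ^ N * a := by
        calc a' = φ₀inv v := rfl
          _ ≤ φ₀inv (2 ^ N * u) := hinvmono₀ _ _ (hu0.le.trans huv) (by nlinarith)
          _ ≤ 2 ^ N * a := hinvpow₀ N u hu0.le
      have hb'bound : b' ≤ 2 ^ N * b := by
        calc b' = φ₁inv v := rfl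
          _ ≤ φ₁inv (2 ^ N * u) := hinvmono₁ _ _ (hu0.le.trans huv) (by nlinarith)
          _ ≤ 2 ^ N * b := hinvpow₁ N u hu0.le
      -- log bounds
      have hla : Real.log a ≤ Real.log a' := Real.log_le_log hapos haa'
      have hlb : Real.log b ≤ Real.log b' := Real.log_le_log hbpos hbb'
      have hla2 : Real.log a' ≤ Real.log a + N * Real.log 2 := by
        have := Real.log_le_log (hapos.trans_le haa') ha'bound
        rwa [Real.log_mul (by positivity) hapos.ne', Real.log_pow, add_comm] at this
      have hlb2 : Real.log b' ≤ Real.log b + N * Real.log 2 := by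
        have := Real.log_le_log (hbpos.trans_le hbb') hb'bound
        rwa [Real.log_mul (by positivity) hbpos.ne', Real.log_pow, add_comm] at this
      set D : ℝ := (Real.log b - Real.log a) - (Real.log b' - Real.log a') with hD
      have hDb : |D| ≤ N * Real.log 2 := by
        have hN0 : (0:ℝ) ≤ N * Real.log 2 := by positivity
        refine abs_le.mpr ⟨?_, ?_⟩ <;> rw [hD] <;> linarith
      -- rewrite the difference
      have hdiff : 2 * Ω x - Ω (2 * x) = (2 * x) * ((D : ℝ) : ℂ) := by
        rw [hΩ x hx, hΩ (2 * x) h2x]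
        simp only [← hu, ← hv, ← ha, ← ha', ← hb, ← hb', hD]
        push_cast
        ring
      have habsdiff : ‖2 * Ω x - Ω (2 * x)‖ = 2 * ‖x‖ * |D| := by
        rw [hdiff, norm_mul, norm_mul, Complex.norm_two, Complex.norm_real, Real.norm_eq_abs]
      have hbound : ‖2 * Ω x - Ω (2 * x)‖ ≤ 2 ^ (N + 1) * ‖x‖ := by
        rw [habsdiff]
        have h1 : |D| ≤ (N : ℝ) := by
          calc |D| ≤ N * Real.log 2 := hDb
            _ ≤ N * 1 := by
                apply mul_le_mul_of_nonneg_left hlog2 (by positivity)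
            _ = N := mul_one _
        have h2 : (N : ℝ) ≤ 2 ^ N := by
          exact_mod_cast (Nat.lt_two_pow_self (n := N)).le
        calc 2 * ‖x‖ * |D| ≤ 2 * ‖x‖ * (2 ^ N) :=
              mul_le_mul_of_nonneg_left (h1.trans h2) (by positivity)
          _ = 2 ^ (N + 1) * ‖x‖ := by ring
      calc φθ (‖2 * Ω x - Ω (2 * x)‖)
          ≤ φθ (2 ^ (N + 1) * ‖x‖) := hφθmono _ _ (norm_nonneg _) hbound
        _ ≤ C ^ (N + 1) * φθ (‖x‖) := hφθpow (N + 1) _ habs.le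
        _ = K * φθ (‖x‖) := by rw [hKdef]
  refine ⟨⟨K, hKpos, hmain⟩, ?_⟩
  -- subadditivity-type estimate for φθ
  have hsub : ∀ p q : ℝ, 0 ≤ p → 0 ≤ q → φθ (p + q) ≤ C * (φθ p + φθ q) := by
    intro p q hp hq
    rcases le_total p q with h | h
    · calc φθ (p + q) ≤ φθ (2 * q) := hφθmono _ _ (by linarith) (by linarith)
        _ ≤ C * φθ q := hφθ2 q hq
        _ ≤ C * (φθ p + φθ q) := by nlinarith [hθnonneg p hp]
    · calc φθ (p + q) ≤ φθ (2 * p) := hφθmono _ _ (by linarith) (by linarith)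
        _ ≤ C * φθ p := hφθ2 p hp
        _ ≤ C * (φθ p + φθ q) := by nlinarith [hθnonneg q hq]
  refine ⟨C * C + C + C * K, by positivity, ?_⟩
  intro x₁ x₀
  simp only [Ψ]
  have habs2 : ‖2 * x₀‖ = 2 * ‖x₀‖ := by
    rw [norm_mul, Complex.norm_two]
  have hterm1 : φθ (‖2 * x₀‖) ≤ C * φθ (‖x₀‖) := by
    rw [habs2]
    exact hφθ2 _ (norm_nonneg _)
  have htri : ‖2 * x₁ - Ω (2 * x₀)‖ ≤
      2 * ‖x₁ - Ω x₀‖ + ‖2 * Ω x₀ - Ω (2 * x₀)‖ := by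
    have : 2 * x₁ - Ω (2 * x₀) = 2 * (x₁ - Ω x₀) + (2 * Ω x₀ - Ω (2 * x₀)) := by ring
    rw [this]
    calc ‖2 * (x₁ - Ω x₀) + (2 * Ω x₀ - Ω (2 * x₀))‖
        ≤ ‖2 * (x₁ - Ω x₀)‖ + ‖2 * Ω x₀ - Ω (2 * x₀)‖ :=
          norm_add_le _ _
      _ = 2 * ‖x₁ - Ω x₀‖ + ‖2 * Ω x₀ - Ω (2 * x₀)‖ := by
          rw [norm_mul, Complex.norm_two]
  have hterm2 : φθ (‖2 * x₁ - Ω (2 * x₀)‖) ≤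
      C * (C * φθ (‖x₁ - Ω x₀‖) + K * φθ (‖x₀‖)) := by
    calc φθ (‖2 * x₁ - Ω (2 * x₀)‖)
        ≤ φθ (2 * ‖x₁ - Ω x₀‖ + ‖2 * Ω x₀ - Ω (2 * x₀)‖) :=
          hφθmono _ _ (norm_nonneg _) htri
      _ ≤ C * (φθ (2 * ‖x₁ - Ω x₀‖) + φθ (‖2 * Ω x₀ - Ω (2 * x₀)‖)) :=
          hsub _ _ (by positivity) (norm_nonneg _)
      _ ≤ C * (C * φθ (‖x₁ - Ω x₀‖) + K * φθ (‖x₀‖)) := by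
          have h1 : φθ (2 * ‖x₁ - Ω x₀‖) ≤ C * φθ (‖x₁ - Ω x₀‖) :=
            hφθ2 _ (norm_nonneg _)
          have h2 := hmain x₀
          nlinarith
  have hn1 : 0 ≤ φθ (‖x₀‖) := hθnonneg _ (norm_nonneg _)
  have hn2 : 0 ≤ φθ (‖x₁ - Ω x₀‖) := hθnonneg _ (norm_nonneg _)
  nlinarith [hterm1, hterm2,
    mul_nonneg (mul_nonneg hC0.le hC0.le) hn1,
    mul_nonneg hC0.le hn2,
    mul_nonneg (mul_nonneg hC0.le hKpos.le) hn2]
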